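/- For the step function f on [a,b] equal to m on [a,(a+b)/2] and M on [(a+b)/2,b] (0 < m < M), one has T(f,f;a,b) = (M-m)²/4 and (1/(b-a))∫_a^b f = (m+M)/2; consequently any constant c with |T(f,f;a,b)| ≤ c·((M-m)²/(mM))·((1/(b-a))∫_a^b f)² must satisfy mM ≤ c(M+m)². -/

import Mathlib

open MeasureTheory intervalIntegral

lemma step_int (a b p q : ℝ) (hab : a < b) :
    ∫ x in a..b, (if x ≤ (a + b) / 2 then p else q) =
      p * ((b - a) / 2) + q * ((b - a) / 2) := by
  have hmem : (a + b) / 2 ∈ Set.Icc a b := by constructor <;> linarith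
  have key : (fun x : ℝ => if x ≤ (a + b) / 2 then p else q) =
      fun x => Set.indicator {x : ℝ | x ≤ (a + b) / 2} (fun _ => p - q) x + q := by
    funext x
    by_cases h : x ≤ (a + b) / 2 <;>
      simp [Set.indicator, h]
  rw [key]
  rw [intervalIntegral.integral_add _ intervalIntegrable_const]
  · rw [intervalIntegral.integral_indicator hmem]
    simp
    ring
  · rw [intervalIntegrable_iff]
    exact (integrableOn_const measure_Ioc_lt_top.ne).indicator
      measurableSet_Iic

theorem step_function_chebyshev
    (a b m M : ℝ) (hab : a < b) (hm : 0 < m) (hmM : m < M)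
    (f : ℝ → ℝ) (hf : f = fun x => if x ≤ (a + b) / 2 then m else M) :
    ((1 / (b - a)) * ∫ x in a..b, f x ^ 2 -
        ((1 / (b - a)) * ∫ x in a..b, f x) ^ 2 = (M - m) ^ 2 / 4) ∧
    ((1 / (b - a)) * ∫ x in a..b, f x = (m + M) / 2) ∧
    (∀ c : ℝ,
      |(1 / (b - a)) * ∫ x in a..b, f x ^ 2 -
        ((1 / (b - a)) * ∫ x in a..b, f x) ^ 2| ≤
        c * ((M - m) ^ 2 / (m * M)) * ((1 / (b - a)) * ∫ x in a..b, f x) ^ 2 →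
      m * M ≤ c * (M + m) ^ 2) := by
  have hba : b - a ≠ 0 := by linarith
  have h1 : ∫ x in a..b, f x = m * ((b - a) / 2) + M * ((b - a) / 2) := by
    rw [hf]; exact step_int a b m M hab
  have hmean : (1 / (b - a)) * ∫ x in a..b, f x = (m + M) / 2 := by
    rw [h1]; field_simp
  have hT : ((1 / (b - a)) * ∫ x in a..b, f x ^ 2 -
      ((1 / (b - a)) * ∫ x in a..b, f x) ^ 2 = (M - m) ^ 2 / 4) := by
    rw [hmean, hf]
    have heq : (fun x : ℝ => ((if x ≤ (a + b) / 2 then m else M)) ^ 2 - ((m + M) / 2) ^ 2) =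
        fun x : ℝ => if x ≤ (a + b) / 2 then m ^ 2 - ((m + M) / 2) ^ 2
          else M ^ 2 - ((m + M) / 2) ^ 2 := by
      funext x; by_cases h : x ≤ (a + b) / 2 <;> simp [h]
    rw [show (∫ x in a..b, ((if x ≤ (a + b) / 2 then m else M)) ^ 2 - ((m + M) / 2) ^ 2)
        = ∫ x in a..b, (if x ≤ (a + b) / 2 then m ^ 2 - ((m + M) / 2) ^ 2
          else M ^ 2 - ((m + M) / 2) ^ 2) from by rw [heq]]
    rw [step_int a b _ _ hab]
    field_simp; ring
  refine ⟨hT, hmean, fun c hc => ?_⟩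
  rw [hT, hmean] at hc
  rw [abs_of_nonneg (div_nonneg (sq_nonneg (M - m)) (by norm_num) : (0:ℝ) ≤ (M - m) ^ 2 / 4)] at hc
  have hmM' : (0:ℝ) < m * M := mul_pos hm (hm.trans hmM)
  have h4 : (M - m) ^ 2 / 4 * (m * M) ≤ c * (M - m) ^ 2 * ((m + M) / 2) ^ 2 := by
    have h5 := mul_le_mul_of_nonneg_right hc (le_of_lt hmM')
    calc (M - m) ^ 2 / 4 * (m * M)
        ≤ c * ((M - m) ^ 2 / (m * M)) * ((m + M) / 2) ^ 2 * (m * M) := h5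
      _ = c * (M - m) ^ 2 * ((m + M) / 2) ^ 2 := by field_simp [hm.ne', (hm.trans hmM).ne']
  have hMm : (0:ℝ) < (M - m) ^ 2 := by
    have h6 : M - m ≠ 0 := by linarith
    positivity
  by_contra hcon
  push_neg at hcon
  nlinarith [mul_pos (sub_pos.mpr hcon) hMm]
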